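/- There is no 7×7 Latin square that is both non-consecutive by king's move and anti-king. -/
import Mathlib


/-- An `n × n` Latin square with entries in `{1, …, n}`. -/
def latin (n : ℕ) (M : Fin n → Fin n → ℕ) : Prop :=
  (∀ i j, M i j ∈ Finset.Icc 1 n) ∧
  (∀ i, Function.Injective fun j => M i j) ∧
  (∀ j, Function.Injective fun i => M i j)

/-- Two cells are orthogonally adjacent. -/
def orthAdj (n : ℕ) (p q : Fin n × Fin n) : Prop :=
  (p.1 = q.1 ∧ (p.2.val + 1 = q.2.val ∨ q.2.val + 1 = p.2.val)) ∨
  (p.2 = q.2 ∧ (p.1.val + 1 = q.1.val ∨ q.1.val + 1 = p.1.val))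

/-- Two cells are a king's move apart (orthogonally or diagonally adjacent). -/
def kingAdj (n : ℕ) (p q : Fin n × Fin n) : Prop :=
  p ≠ q ∧ ((p.1.val : ℤ) - q.1.val).natAbs ≤ 1 ∧ ((p.2.val : ℤ) - q.2.val).natAbs ≤ 1

/-- Two cells are a knight's move apart. -/
def knightAdj (n : ℕ) (p q : Fin n × Fin n) : Prop :=
  (((p.1.val : ℤ) - q.1.val).natAbs = 1 ∧ ((p.2.val : ℤ) - q.2.val).natAbs = 2) ∨
  (((p.1.val : ℤ) - q.1.val).natAbs = 2 ∧ ((p.2.val : ℤ) - q.2.val).natAbs = 1)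

/-- Two cells are a bishop's move apart: on a common diagonal, at nonzero distance. -/
def bishopMove (n : ℕ) (p q : Fin n × Fin n) : Prop :=
  ((p.1.val : ℤ) - q.1.val).natAbs = ((p.2.val : ℤ) - q.2.val).natAbs ∧ p.1 ≠ q.1

/-- Two cells are orthogonally adjacent on the torus (wrapping around). -/
def torAdj (n : ℕ) (p q : Fin n × Fin n) : Prop :=
  p ≠ q ∧
    ((p.1 = q.1 ∧ ((p.2.val + 1) % n = q.2.val ∨ (q.2.val + 1) % n = p.2.val)) ∨
     (p.2 = q.2 ∧ ((p.1.val + 1) % n = q.1.val ∨ (q.1.val + 1) % n = p.1.val)))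

/-- Two values differ by exactly 1. -/
def diffOne (a b : ℕ) : Prop := ((a : ℤ) - (b : ℤ)).natAbs = 1

/-- There is no 7×7 Latin square that is both non-consecutive by king's move and
anti-king. -/
theorem stmt8 :
    ¬ ∃ M : Fin 7 → Fin 7 → ℕ, latin 7 M ∧
      ∀ p q : Fin 7 × Fin 7, kingAdj 7 p q →
        M p.1 p.2 ≠ M q.1 q.2 ∧ ¬ diffOne (M p.1 p.2) (M q.1 q.2) := by
  rintro ⟨M, ⟨hmem, hrow, _hcol⟩, H⟩
  -- each row is surjective onto {1,…,7}
  have hsurj : ∀ (i : Fin 7) (v : ℕ), 1 ≤ v → v ≤ 7 → ∃ c : Fin 7, M i c = v := by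
    intro i v h1 h7
    have hf : Function.Injective
        (fun j : Fin 7 => (⟨M i j, hmem i j⟩ : {x // x ∈ Finset.Icc 1 7})) := by
      intro a b hab
      exact hrow i (congrArg Subtype.val hab)
    have hcard : Fintype.card (Fin 7) = Fintype.card {x // x ∈ Finset.Icc (1:ℕ) 7} := by
      simp
    have hb := (Fintype.bijective_iff_injective_and_card _).2 ⟨hf, hcard.symm⟩
    obtain ⟨c, hc⟩ := hb.surjective ⟨v, by simp [Finset.mem_Icc]; omega⟩
    exact ⟨c, congrArg Subtype.val hc⟩
  have key : ∀ (a b x y : Fin 7), a.val ≤ 1 → b.val ≤ 1 →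
      ((a, x) : Fin 7 × Fin 7) ≠ (b, y) →
      x.val < y.val + 2 → y.val < x.val + 2 →
      M a x ≠ M b y ∧ ¬ ((M a x : ℤ) - (M b y : ℤ)).natAbs = 1 := by
    intro a b x y ha hb hne h1 h2
    have := H (a, x) (b, y) ⟨hne, by show ((a.val:ℤ) - b.val).natAbs ≤ 1; omega, by show ((x.val:ℤ) - y.val).natAbs ≤ 1; omega⟩
    exact this
  -- for any value pair (v, v+1), the row-0 columns of v and v+1 are even
  have even2 : ∀ (v : ℕ) (cv cv' dv dv' : Fin 7),
      M 0 cv = v → M 0 cv' = v + 1 → M 1 dv = v → M 1 dv' = v + 1 →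
      cv.val % 2 = 0 ∧ cv'.val % 2 = 0 := by
    intro v cv cv' dv dv' h1 h2 h3 h4
    have hne01 : ∀ x y : Fin 7, ((0 : Fin 7), x) ≠ ((1 : Fin 7), y) := by
      intro x y h
      have := congrArg Prod.fst h
      simp at this
    have p12 : cv.val + 2 ≤ cv'.val ∨ cv'.val + 2 ≤ cv.val := by
      by_contra hcon
      push_neg at hcon
      have hcc : cv ≠ cv' := by
        intro h; rw [h, h2] at h1; omega
      have := key 0 0 cv cv' (by norm_num) (by norm_num)
        (fun h => hcc (congrArg Prod.snd h)) (by omega) (by omega)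
      rw [h1, h2] at this
      omega
    have p34 : dv.val + 2 ≤ dv'.val ∨ dv'.val + 2 ≤ dv.val := by
      by_contra hcon
      push_neg at hcon
      have hcc : dv ≠ dv' := by
        intro h; rw [h, h4] at h3; omega
      have := key 1 1 dv dv' (by norm_num) (by norm_num)
        (fun h => hcc (congrArg Prod.snd h)) (by omega) (by omega)
      rw [h3, h4] at this
      omega
    have p13 : cv.val + 2 ≤ dv.val ∨ dv.val + 2 ≤ cv.val := by
      by_contra hcon
      push_neg at hcon
      have := key 0 1 cv dv (by norm_num) (by norm_num) (hne01 _ _) (by omega) (by omega)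
      rw [h1, h3] at this
      omega
    have p14 : cv.val + 2 ≤ dv'.val ∨ dv'.val + 2 ≤ cv.val := by
      by_contra hcon
      push_neg at hcon
      have := key 0 1 cv dv' (by norm_num) (by norm_num) (hne01 _ _) (by omega) (by omega)
      rw [h1, h4] at this
      omega
    have p23 : cv'.val + 2 ≤ dv.val ∨ dv.val + 2 ≤ cv'.val := by
      by_contra hcon
      push_neg at hcon
      have := key 0 1 cv' dv (by norm_num) (by norm_num) (hne01 _ _) (by omega) (by omega)
      rw [h2, h3] at this
      omega
    have p24 : cv'.val + 2 ≤ dv'.val ∨ dv'.val + 2 ≤ cv'.val := by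
      by_contra hcon
      push_neg at hcon
      have := key 0 1 cv' dv' (by norm_num) (by norm_num) (hne01 _ _) (by omega) (by omega)
      rw [h2, h4] at this
      omega
    have b1 := cv.isLt
    have b2 := cv'.isLt
    have b3 := dv.isLt
    have b4 := dv'.isLt
    omega
  obtain ⟨c1, h1⟩ := hsurj 0 1 (by norm_num) (by norm_num)
  obtain ⟨c2, h2⟩ := hsurj 0 2 (by norm_num) (by norm_num)
  obtain ⟨c3, h3⟩ := hsurj 0 3 (by norm_num) (by norm_num)
  obtain ⟨c4, h4⟩ := hsurj 0 4 (by norm_num) (by norm_num)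
  obtain ⟨c5, h5⟩ := hsurj 0 5 (by norm_num) (by norm_num)
  obtain ⟨c6, h6⟩ := hsurj 0 6 (by norm_num) (by norm_num)
  obtain ⟨d1, g1⟩ := hsurj 1 1 (by norm_num) (by norm_num)
  obtain ⟨d2, g2⟩ := hsurj 1 2 (by norm_num) (by norm_num)
  obtain ⟨d3, g3⟩ := hsurj 1 3 (by norm_num) (by norm_num)
  obtain ⟨d4, g4⟩ := hsurj 1 4 (by norm_num) (by norm_num)
  obtain ⟨d5, g5⟩ := hsurj 1 5 (by norm_num) (by norm_num)
  obtain ⟨d6, g6⟩ := hsurj 1 6 (by norm_num) (by norm_num)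
  have e12 := even2 1 c1 c2 d1 d2 h1 (by rw [h2]) g1 (by rw [g2])
  have e34 := even2 3 c3 c4 d3 d4 h3 (by rw [h4]) g3 (by rw [g4])
  have e56 := even2 5 c5 c6 d5 d6 h5 (by rw [h6]) g5 (by rw [g6])
  -- the six row-0 columns are pairwise distinct
  have hd : ∀ (u w : ℕ) (x y : Fin 7), M 0 x = u → M 0 y = w → u ≠ w → x.val ≠ y.val := by
    intro u w x y hx hy huw hxy
    exact huw (by rw [← hx, ← hy, Fin.ext hxy])
  have d12 := hd 1 2 c1 c2 h1 h2 (by norm_num)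
  have d13 := hd 1 3 c1 c3 h1 h3 (by norm_num)
  have d14 := hd 1 4 c1 c4 h1 h4 (by norm_num)
  have d15 := hd 1 5 c1 c5 h1 h5 (by norm_num)
  have d16 := hd 1 6 c1 c6 h1 h6 (by norm_num)
  have d23 := hd 2 3 c2 c3 h2 h3 (by norm_num)
  have d24 := hd 2 4 c2 c4 h2 h4 (by norm_num)
  have d25 := hd 2 5 c2 c5 h2 h5 (by norm_num)
  have d26 := hd 2 6 c2 c6 h2 h6 (by norm_num)
  have d34 := hd 3 4 c3 c4 h3 h4 (by norm_num)
  have d35 := hd 3 5 c3 c5 h3 h5 (by norm_num)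
  have d36 := hd 3 6 c3 c6 h3 h6 (by norm_num)
  have d45 := hd 4 5 c4 c5 h4 h5 (by norm_num)
  have d46 := hd 4 6 c4 c6 h4 h6 (by norm_num)
  have d56 := hd 5 6 c5 c6 h5 h6 (by norm_num)
  have b1 := c1.isLt
  have b2 := c2.isLt
  have b3 := c3.isLt
  have b4 := c4.isLt
  have b5 := c5.isLt
  have b6 := c6.isLt
  omega
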